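/- Let v be a vertex of a tree T of order n ≥ 3 minimizing ww_T, and T_i a component of T − v of order n_i. If Σ_{x∈V(T_i)} d_T(v,x) ≥ n_i, then n_i ≤ (1/2)·Σ_{y∈V(T)∖V(T_i)} d_T(v,y) + n/2. -/
import Mathlib

open Finset
open scoped Classical

/-- Local hyper-Wiener function: `ww G v = Σ_u (d(u,v)² + d(u,v))`. -/
noncomputable def ww {V : Type*} [Fintype V] (G : SimpleGraph V) (v : V) : ℕ :=
  ∑ u : V, ((G.dist u v) ^ 2 + G.dist u v)

section aux

variable {V : Type*} {T : SimpleGraph V} {v : V}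

private lemma isolated_del (y : V) : ¬ (T.deleteEdges (T.incidenceSet v)).Adj v y := by
  intro h
  rw [SimpleGraph.deleteEdges_adj] at h
  exact h.2 ((T.mem_incidenceSet v y).mpr h.1)

private lemma not_mem_support_del :
    ∀ {a b : V} (p : (T.deleteEdges (T.incidenceSet v)).Walk a b),
      a ≠ v → b ≠ v → v ∉ p.support := by
  intro a b p
  induction p with
  | nil =>
    intro ha _hb h
    simp only [SimpleGraph.Walk.support_nil, List.mem_singleton] at h
    exact ha h.symm
  | @cons a c b h q ih =>
    intro ha hb hmem
    simp only [SimpleGraph.Walk.support_cons, List.mem_cons] at hmem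
    rcases hmem with rfl | hmem
    · exact ha rfl
    · have hc : c ≠ v := by
        rintro rfl
        exact isolated_del a h.symm
      exact ih hc hb hmem

private lemma not_reach_del {vi : V} (hvi : T.Adj v vi) :
    ¬ (T.deleteEdges (T.incidenceSet v)).Reachable vi v := by
  intro h
  obtain ⟨p⟩ := h.symm
  cases p with
  | nil => exact hvi.ne rfl
  | cons h' q => exact isolated_del _ h'

private lemma walk_decomp {a b : V} (p : T.Walk a b) (hp : p.IsPath) (hab : a ≠ b) :
    ∃ w, ∃ _ : T.Adj a w, ∃ r : T.Walk w b,
      r.length + 1 = p.length ∧ r.IsPath ∧ a ∉ r.support := by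
  cases p with
  | nil => exact absurd rfl hab
  | cons h r =>
    rw [SimpleGraph.Walk.cons_isPath_iff] at hp
    exact ⟨_, h, r, by simp, hp.1, hp.2⟩

private lemma edges_avoid {a b : V} (r : T.Walk a b) (hvr : v ∉ r.support) :
    ∀ e ∈ r.edges, e ∉ T.incidenceSet v := by
  intro e
  induction e using Sym2.ind with
  | _ c d =>
    intro he hmem
    rcases Sym2.mem_iff.mp hmem.2 with rfl | rfl
    · exact hvr (r.fst_mem_support_of_mem_edges he)
    · exact hvr (r.snd_mem_support_of_mem_edges he)

private lemma dist_in (hT : T.IsTree) {vi : V} (hvi : T.Adj v vi) (x : V)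
    (hx : (T.deleteEdges (T.incidenceSet v)).Reachable vi x) :
    T.dist v x = T.dist vi x + 1 := by
  have hconn := hT.isConnected
  have hxv : x ≠ v := by
    rintro rfl
    exact not_reach_del hvi hx
  obtain ⟨p, hp⟩ := hconn.exists_walk_length_eq_dist v x
  obtain ⟨w, hvw, r, hrlen, hrp, hvr⟩ :=
    walk_decomp p.bypass p.bypass_isPath (Ne.symm hxv)
  have hqlen : p.bypass.length ≤ T.dist v x := hp ▸ p.length_bypass_le
  -- transfer r to the deleted graph
  have r' : (T.deleteEdges (T.incidenceSet v)).Walk w x :=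
    r.toDeleteEdges _ (edges_avoid r hvr)
  have hr'' : (T.deleteEdges (T.incidenceSet v)).Reachable w x := ⟨r'⟩
  have hreach : (T.deleteEdges (T.incidenceSet v)).Reachable vi w := hx.trans hr''.symm
  -- show w = vi using uniqueness of paths
  obtain ⟨P⟩ := hreach
  have hPp := P.bypass_isPath
  have hPs : v ∉ P.bypass.support :=
    not_mem_support_del P.bypass hvi.ne' hvw.ne'
  have hle : T.deleteEdges (T.incidenceSet v) ≤ T := SimpleGraph.deleteEdges_le _
  have hPE : ∀ e ∈ P.bypass.edges, e ∈ T.edgeSet := fun e he =>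
    SimpleGraph.edgeSet_mono hle (P.bypass.edges_subset_edgeSet he)
  set Q : T.Walk vi w := P.bypass.transfer T hPE with hQ
  have hQp : Q.IsPath := hPp.transfer hPE
  have hQs : v ∉ Q.support := by
    rwa [hQ, SimpleGraph.Walk.support_transfer]
  have h1 : (SimpleGraph.Walk.cons hvw SimpleGraph.Walk.nil : T.Walk v w).IsPath := by
    simp [SimpleGraph.Walk.cons_isPath_iff, hvw.ne]
  have h2 : (SimpleGraph.Walk.cons hvi Q : T.Walk v w).IsPath :=
    (SimpleGraph.Walk.cons_isPath_iff _ _).mpr ⟨hQp, hQs⟩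
  have heq := (hT.existsUnique_path v w).unique h1 h2
  have hlen := congrArg SimpleGraph.Walk.length heq
  simp only [SimpleGraph.Walk.length_cons, SimpleGraph.Walk.length_nil] at hlen
  have hQ0 : Q.length = 0 := by omega
  have hwvi : vi = w := SimpleGraph.Walk.eq_of_length_eq_zero hQ0
  subst hwvi
  have hle1 : T.dist vi x ≤ r.length := SimpleGraph.dist_le r
  have hle2 : T.dist v x ≤ T.dist v vi + T.dist vi x := hconn.dist_triangle
  have hle3 : T.dist v vi ≤ 1 :=
    le_trans (SimpleGraph.dist_le (SimpleGraph.Walk.cons hvi SimpleGraph.Walk.nil)) (by simp)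
  omega

private lemma dist_out (hT : T.IsTree) {vi : V} (hvi : T.Adj v vi) (x : V)
    (hx : ¬ (T.deleteEdges (T.incidenceSet v)).Reachable vi x) :
    T.dist vi x = T.dist v x + 1 := by
  have hconn := hT.isConnected
  obtain ⟨p, hp⟩ := hconn.exists_walk_length_eq_dist vi x
  have hvp : v ∈ p.support := by
    by_contra hvp
    exact hx ⟨p.toDeleteEdges _ (edges_avoid p hvp)⟩
  have hspec := SimpleGraph.Walk.take_spec p hvp
  have hlen := congrArg SimpleGraph.Walk.length hspec
  rw [SimpleGraph.Walk.length_append] at hlen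
  have htake : 1 ≤ (p.takeUntil v hvp).length := by
    rcases Nat.eq_zero_or_pos (p.takeUntil v hvp).length with h0 | h1
    · exact absurd (SimpleGraph.Walk.eq_of_length_eq_zero h0) hvi.ne'
    · exact h1
  have hdrop : T.dist v x ≤ (p.dropUntil v hvp).length :=
    SimpleGraph.dist_le _
  have hle2 : T.dist vi x ≤ T.dist vi v + T.dist v x := hconn.dist_triangle
  have hle3 : T.dist vi v ≤ 1 :=
    le_trans (SimpleGraph.dist_le (SimpleGraph.Walk.cons hvi.symm SimpleGraph.Walk.nil)) (by simp)
  omega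

end aux

theorem stmt13 {V : Type*} [Fintype V] (T : SimpleGraph V) (hT : T.IsTree)
    (hn : 3 ≤ Fintype.card V) (v : V) (hv : ∀ x, ww T v ≤ ww T x)
    (vi : V) (hvi : T.Adj v vi)
    (hsum : (Finset.univ.filter
        (fun x => (T.deleteEdges (T.incidenceSet v)).Reachable vi x)).card
      ≤ ∑ x ∈ Finset.univ.filter
          (fun x => (T.deleteEdges (T.incidenceSet v)).Reachable vi x), T.dist v x) :
    ((Finset.univ.filter
        (fun x => (T.deleteEdges (T.incidenceSet v)).Reachable vi x)).card : ℚ)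
      ≤ ((∑ y ∈ (Finset.univ.filter
            (fun y => (T.deleteEdges (T.incidenceSet v)).Reachable vi y))ᶜ,
            T.dist v y : ℕ) : ℚ) / 2
        + (Fintype.card V : ℚ) / 2 := by
  classical
  set A : Finset V := Finset.univ.filter
    (fun x => (T.deleteEdges (T.incidenceSet v)).Reachable vi x) with hA
  have hmemA : ∀ x ∈ A, T.dist x v = T.dist x vi + 1 := by
    intro x hx
    rw [SimpleGraph.dist_comm (G := T) (u := x) (v := v), SimpleGraph.dist_comm (G := T) (u := x) (v := vi)]
    exact dist_in hT hvi x (by simpa [hA] using hx)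
  have hmemB : ∀ x ∈ Aᶜ, T.dist x vi = T.dist x v + 1 := by
    intro x hx
    rw [SimpleGraph.dist_comm (G := T) (u := x) (v := v), SimpleGraph.dist_comm (G := T) (u := x) (v := vi)]
    exact dist_out hT hvi x (by simpa [hA] using hx)
  have e1 : ww T v = ∑ x ∈ A, ((T.dist x vi + 1) ^ 2 + (T.dist x vi + 1))
      + ∑ x ∈ Aᶜ, ((T.dist x v) ^ 2 + T.dist x v) := by
    rw [ww, ← Finset.sum_add_sum_compl A]
    congr 1
    exact Finset.sum_congr rfl fun x hx => by rw [hmemA x hx]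
  have e2 : ww T vi = ∑ x ∈ A, ((T.dist x vi) ^ 2 + T.dist x vi)
      + ∑ x ∈ Aᶜ, ((T.dist x v + 1) ^ 2 + (T.dist x v + 1)) := by
    rw [ww, ← Finset.sum_add_sum_compl A]
    congr 1
    exact Finset.sum_congr rfl fun x hx => by rw [hmemB x hx]
  have hineq := hv vi
  rw [e1, e2] at hineq
  have l1 : ∑ x ∈ A, ((T.dist x vi + 1) ^ 2 + (T.dist x vi + 1))
      = ∑ x ∈ A, ((T.dist x vi) ^ 2 + T.dist x vi) + ∑ x ∈ A, (2 * T.dist x vi + 2) := by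
    rw [← Finset.sum_add_distrib]
    exact Finset.sum_congr rfl fun x _ => by ring
  have l2 : ∑ x ∈ Aᶜ, ((T.dist x v + 1) ^ 2 + (T.dist x v + 1))
      = ∑ x ∈ Aᶜ, ((T.dist x v) ^ 2 + T.dist x v) + ∑ x ∈ Aᶜ, (2 * T.dist x v + 2) := by
    rw [← Finset.sum_add_distrib]
    exact Finset.sum_congr rfl fun x _ => by ring
  rw [l1, l2] at hineq
  have key : ∑ x ∈ A, (2 * T.dist x vi + 2) ≤ ∑ x ∈ Aᶜ, (2 * T.dist x v + 2) := by omega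
  have k1 : ∑ x ∈ A, (2 * T.dist x vi + 2) = 2 * ∑ x ∈ A, T.dist x vi + 2 * A.card := by
    rw [Finset.sum_add_distrib, ← Finset.mul_sum, Finset.sum_const, smul_eq_mul]
    ring
  have k2 : ∑ x ∈ Aᶜ, (2 * T.dist x v + 2) = 2 * ∑ x ∈ Aᶜ, T.dist x v + 2 * Aᶜ.card := by
    rw [Finset.sum_add_distrib, ← Finset.mul_sum, Finset.sum_const, smul_eq_mul]
    ring
  rw [k1, k2] at key
  have hcomm : ∑ x ∈ Aᶜ, T.dist x v = ∑ y ∈ Aᶜ, T.dist v y :=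
    Finset.sum_congr rfl fun x _ => SimpleGraph.dist_comm (G := T) (u := x) (v := v)
  rw [hcomm] at key
  have hcard : A.card + Aᶜ.card = Fintype.card V := Finset.card_add_card_compl A
  have h2 : 2 * A.card ≤ (∑ y ∈ Aᶜ, T.dist v y) + Fintype.card V := by omega
  have h2' : ((2 * A.card : ℕ) : ℚ) ≤ ((∑ y ∈ Aᶜ, T.dist v y + Fintype.card V : ℕ) : ℚ) := by
    exact_mod_cast h2
  push_cast at h2' ⊢
  linarith
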